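/- arXiv:1712.07111 — 2 statements merged into one kernel-verified Lean document; each statement's English description precedes it below -/
import Mathlib

section
/- Let γ ∈ [−3,0), 0 < T̲ ≤ T, and λ, Λ > 0. Suppose ā : (T̲/2, T]×ℝ³×ℝ³ → Sym₃(ℝ) and c̄ : (T̲/2, T]×ℝ³×ℝ³ → [0,∞) satisfy, for all (t,x,v): e·ā(t,x,v)e ≥ λ⟨v⟩^γ for every unit vector e; v·ā(t,x,v)v ≥ λ|v|²⟨v⟩^γ; tr ā(t,x,v) ≤ Λ⟨v⟩^{γ+2}; and v·ā(t,x,v)v ≤ Λ|v|²⟨v⟩^γ. Then there exists C₁ > 0, depending only on γ, λ, Λ, such that for every δ₁ > 0 the function f̲(t,x,v) = δ₁ exp(−β(t)|v|^{2−γ}) with β(t) = 1 + C₁/(t − T̲/2) satisfies the differential inequality ∂_t f̲ + v·∇_x f̲ − tr(ā(t,x,v) D²_v f̲) − c̄(t,x,v) f̲ ≤ 0 for all (t,x,v) with t ∈ (T̲/2, T] and |v| ≥ 1 (i.e., f̲ is a subsolution of the linear Landau-type equation on this region). -/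
noncomputable section

open MeasureTheory Real Filter ENNReal

/-- Velocity/position space ℝ³. -/
abbrev E3 : Type := EuclideanSpace ℝ (Fin 3)

/-- Japanese bracket `⟨v⟩ = (1 + |v|²)^{1/2}`. -/
def jap (v : E3) : ℝ := Real.sqrt (1 + ‖v‖ ^ 2)

/-- Partial derivative ∂_{x_i} of a function on phase space ℝ³ₓ × ℝ³ᵥ. -/
def pdX (i : Fin 3) (f : E3 × E3 → ℝ) : E3 × E3 → ℝ :=
  fun z => fderiv ℝ f z (EuclideanSpace.single i 1, 0)

/-- Partial derivative ∂_{v_i} of a function on phase space ℝ³ₓ × ℝ³ᵥ. -/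
def pdV (i : Fin 3) (f : E3 × E3 → ℝ) : E3 × E3 → ℝ :=
  fun z => fderiv ℝ f z (0, EuclideanSpace.single i 1)

/-- Multi-index derivative ∂_x^α ∂_v^β. -/
def pdM (α β : Fin 3 → ℕ) (f : E3 × E3 → ℝ) : E3 × E3 → ℝ :=
  (pdV 2)^[β 2] <| (pdV 1)^[β 1] <| (pdV 0)^[β 0] <|
  (pdX 2)^[α 2] <| (pdX 1)^[α 1] <| (pdX 0)^[α 0] f

/-- Pairs of multi-indices (α, β) with |α| + |β| ≤ k. -/
def multiIdx (k : ℕ) : Finset ((Fin 3 → ℕ) × (Fin 3 → ℕ)) :=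
  (Finset.Icc 0 (fun _ => k) ×ˢ Finset.Icc 0 (fun _ => k)).filter
    (fun p => (∑ i, p.1 i) + (∑ i, p.2 i) ≤ k)

/-- The squared uniformly local Sobolev norm ‖g‖²_{H^{k,ℓ}_ul(ℝ⁶)}
(relative to a cutoff function φ). -/
def ulNormSq (φ : E3 → ℝ) (k ℓ : ℕ) (g : E3 × E3 → ℝ) : ℝ≥0∞ :=
  ∑ p ∈ multiIdx k,
    ⨆ a : E3, ∫⁻ z : E3 × E3,
      ENNReal.ofReal ((φ (z.1 - a) * jap z.2 ^ ℓ * pdM p.1 p.2 g z) ^ 2)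

/-- φ is an admissible cutoff: smooth, compactly supported, 0 ≤ φ ≤ 1,
φ ≡ 1 on B₁ and φ ≡ 0 outside B₂. -/
def IsCutoff (φ : E3 → ℝ) : Prop :=
  ContDiff ℝ (⊤ : ℕ∞) φ ∧ HasCompactSupport φ ∧ (∀ x, 0 ≤ φ x ∧ φ x ≤ 1) ∧
  (∀ x ∈ Metric.ball (0 : E3) 1, φ x = 1) ∧ (∀ x ∉ Metric.ball (0 : E3) 2, φ x = 0)

/-- Membership in Y^k_T = L^∞([0,T], H^k_ul) ∩ L²([0,T], H^{k,1}_ul). -/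
def MemY (φ : E3 → ℝ) (k : ℕ) (T : ℝ) (F : ℝ → E3 × E3 → ℝ) : Prop :=
  (∃ C : ℝ≥0∞, C < ⊤ ∧ ∀ t ∈ Set.Icc (0 : ℝ) T, ulNormSq φ k 0 (F t) ≤ C) ∧
  (∫⁻ t in Set.Icc (0 : ℝ) T, ulNormSq φ k 1 (F t)) < ⊤

/-- The Landau diffusion matrix ā[h] for h : ℝ³ → ℝ. -/
def abar (γ aγ : ℝ) (h : E3 → ℝ) (v : E3) : Matrix (Fin 3) (Fin 3) ℝ :=
  Matrix.of fun i j =>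
    aγ * ∫ w : E3, ((if i = j then (1 : ℝ) else 0) - w i * w j / ‖w‖ ^ 2) *
      ‖w‖ ^ (γ + 2) * h (v - w)

/-- The Landau reaction coefficient c̄[h] (with the convention c̄[h] = c₃ h when γ = −3). -/
def cbar (γ cγ c3 : ℝ) (h : E3 → ℝ) (v : E3) : ℝ :=
  if γ = -3 then c3 * h v else cγ * ∫ w : E3, ‖w‖ ^ γ * h (v - w)

/-- f is a (pointwise, classical) solution of the Landau equation on [0,T] × ℝ³ × ℝ³. -/
def IsLandauSolution (γ aγ cγ c3 T : ℝ) (f : ℝ → E3 × E3 → ℝ) : Prop :=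
  ∀ t ∈ Set.Icc (0 : ℝ) T, ∀ x v : E3,
    deriv (fun s => f s (x, v)) t + ∑ i, v i * pdX i (f t) (x, v) =
      (∑ i, ∑ j, abar γ aγ (fun w => f t (x, w)) v i j * pdV i (pdV j (f t)) (x, v)) +
        cbar γ cγ c3 (fun w => f t (x, w)) v * f t (x, v)

/-- Mass density M(t,x). -/
def massDensity (f : ℝ → E3 × E3 → ℝ) (t : ℝ) (x : E3) : ℝ := ∫ v : E3, f t (x, v)

/-- Energy density E(t,x). -/
def energyDensity (f : ℝ → E3 × E3 → ℝ) (t : ℝ) (x : E3) : ℝ :=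
  ∫ v : E3, ‖v‖ ^ 2 * f t (x, v)

/-- Moment density P(t,x) = ∫ |v|^p f dv. -/
def momentDensity (p : ℝ) (f : ℝ → E3 × E3 → ℝ) (t : ℝ) (x : E3) : ℝ :=
  ∫ v : E3, ‖v‖ ^ p * f t (x, v)

/-- The physical quantities are bounded by K on [0,T]: mass and energy when γ ∈ (−2,0);
additionally the p-th moment and the L^∞-in-v norm when γ ∈ [−3,−2]. -/
def PhysBoundedBy (γ p K T : ℝ) (f : ℝ → E3 × E3 → ℝ) : Prop :=
  ∀ t ∈ Set.Icc (0 : ℝ) T, ∀ x : E3,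
    ((-2 < γ) → massDensity f t x + energyDensity f t x ≤ K) ∧
    (γ ≤ -2 →
      massDensity f t x + energyDensity f t x + momentDensity p f t x ≤ K ∧
      ∀ v : E3, |f t (x, v)| ≤ K)

/-- g : ℝ³×ℝ³ → ℝ is well-distributed with parameters R, δ, r. -/
def WellDistributed (R δ r : ℝ) (g : E3 × E3 → ℝ) : Prop :=
  ∀ x : E3, ∃ xm ∈ Metric.ball x R, ∃ vm ∈ Metric.ball (0 : E3) R,
    ∀ z : E3 × E3, z.1 ∈ Metric.ball xm r → z.2 ∈ Metric.ball vm r → δ ≤ g z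

end

namespace Stmt17

noncomputable section
open MeasureTheory Real Filter ENNReal

/-- Partial derivative ∂_{v_i} for functions on ℝ³. -/
def pd3 (i : Fin 3) (h : E3 → ℝ) : E3 → ℝ :=
  fun v => fderiv ℝ h v (EuclideanSpace.single i 1)

/-- The barrier f̲(t,x,v) = δ₁ exp(−β(t)|v|^{2−γ}) with β(t) = 1 + C₁/(t − T̲/2). -/
def subf (γ Tlow δ₁ C₁ : ℝ) (t : ℝ) (v : E3) : ℝ :=
  δ₁ * Real.exp (-(1 + C₁ / (t - Tlow / 2)) * ‖v‖ ^ (2 - γ))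


set_option maxHeartbeats 1000000

noncomputable section AuxCalc
open Real

/-- Squared norm as a sum of coordinate squares. -/
def S3 (u : E3) : ℝ := ∑ k, u k * u k

/-- Derivative of `S3`. -/
def D3 (u : E3) : E3 →L[ℝ] ℝ := ∑ k, (2 * u k) • (EuclideanSpace.proj k : E3 →L[ℝ] ℝ)

lemma S3_eq (u : E3) : S3 u = ‖u‖ ^ 2 := by
  rw [EuclideanSpace.norm_eq, Real.sq_sqrt (by positivity)]
  simp [S3, Real.norm_eq_abs, sq_abs, sq]

lemma S3_cont : Continuous S3 :=
  continuous_finset_sum _ fun k _ =>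
    ((EuclideanSpace.proj (𝕜 := ℝ) k).continuous.mul (EuclideanSpace.proj (𝕜 := ℝ) k).continuous)

lemma hasFDerivAt_S3 (v : E3) : HasFDerivAt S3 (D3 v) v := by
  have h : HasFDerivAt S3 (∑ k : Fin 3, (v k • (EuclideanSpace.proj k : E3 →L[ℝ] ℝ) +
      v k • (EuclideanSpace.proj k : E3 →L[ℝ] ℝ))) v :=
    HasFDerivAt.fun_sum fun k _ =>
      ((EuclideanSpace.proj k : E3 →L[ℝ] ℝ).hasFDerivAt).mul
        ((EuclideanSpace.proj k : E3 →L[ℝ] ℝ).hasFDerivAt)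
  have e : ∀ k : Fin 3, (v k • (EuclideanSpace.proj k : E3 →L[ℝ] ℝ) +
      v k • (EuclideanSpace.proj k : E3 →L[ℝ] ℝ)) = (2 * v k) • (EuclideanSpace.proj k : E3 →L[ℝ] ℝ) := by
    intro k; rw [← add_smul]; ring_nf
  rw [D3]; simpa [e] using h

lemma D3_apply (u : E3) (i : Fin 3) : D3 u (EuclideanSpace.single i 1) = 2 * u i := by
  simp [D3, ContinuousLinearMap.sum_apply, EuclideanSpace.single_apply]

variable (b p δ₁ : ℝ)

/-- The barrier as a function of `v` alone. -/
def F (u : E3) : ℝ := δ₁ * Real.exp (-b * S3 u ^ p)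

/-- First derivative of `F`. -/
def G (j : Fin 3) (u : E3) : ℝ := F b p δ₁ u * (-(b * p) * S3 u ^ (p - 1) * (2 * u j))

lemma hasFDerivAt_F {v : E3} (hS : 0 < S3 v) :
    HasFDerivAt (F b p δ₁) ((F b p δ₁ v * (-b * (p * S3 v ^ (p - 1)))) • D3 v) v := by
  have h := ((((hasFDerivAt_S3 v).rpow_const (p := p) (Or.inl hS.ne')).const_mul (-b)).exp).const_mul δ₁
  have : HasFDerivAt (F b p δ₁)
      (δ₁ • (Real.exp (-b * S3 v ^ p) • ((-b) • ((p * S3 v ^ (p - 1)) • D3 v)))) v := h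
  convert this using 1
  simp only [smul_smul, F]; ring_nf

lemma pd3_F {v : E3} (hS : 0 < S3 v) (j : Fin 3) :
    pd3 j (F b p δ₁) v = G b p δ₁ j v := by
  rw [pd3, (hasFDerivAt_F b p δ₁ hS).fderiv]
  simp only [ContinuousLinearMap.smul_apply, D3_apply, smul_eq_mul, G]
  ring

lemma hasFDerivAt_G {v : E3} (hS : 0 < S3 v) (j : Fin 3) :
    HasFDerivAt (G b p δ₁ j)
      ((F b p δ₁ v • ((-(b*p) * S3 v ^ (p-1)) • ((2:ℝ) • (EuclideanSpace.proj j : E3 →L[ℝ] ℝ))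
          + (2 * v j) • ((-(b*p)) • (((p-1) * S3 v ^ (p-1-1)) • D3 v))))
        + (-(b*p) * S3 v ^ (p-1) * (2 * v j)) • ((F b p δ₁ v * (-b * (p * S3 v ^ (p - 1)))) • D3 v)) v := by
  have hW1 : HasFDerivAt (fun u : E3 => -(b*p) * S3 u ^ (p-1))
      ((-(b*p)) • (((p-1) * S3 v ^ (p-1-1)) • D3 v)) v :=
    ((hasFDerivAt_S3 v).rpow_const (p := p-1) (Or.inl hS.ne')).const_mul (-(b*p))
  have hj : HasFDerivAt (fun u : E3 => 2 * u j) ((2:ℝ) • (EuclideanSpace.proj j : E3 →L[ℝ] ℝ)) v :=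
    ((EuclideanSpace.proj j : E3 →L[ℝ] ℝ).hasFDerivAt).const_mul 2
  have hW := hW1.mul hj
  exact (hasFDerivAt_F b p δ₁ hS).mul hW

lemma pd3_G {v : E3} (hS : 0 < S3 v) (i j : Fin 3) :
    pd3 i (G b p δ₁ j) v =
      F b p δ₁ v * ( 4 * (b*p)^2 * S3 v ^ ((p-1)+(p-1)) * v i * v j
        - 4 * (b*p) * (p-1) * S3 v ^ (p-1-1) * v i * v j
        - 2 * (b*p) * S3 v ^ (p-1) * (if i = j then 1 else 0) ) := by
  have hfd := (hasFDerivAt_G (b:=b) (p:=p) (δ₁:=δ₁) hS j).fderiv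
  rw [pd3, hfd]
  simp only [ContinuousLinearMap.add_apply, ContinuousLinearMap.smul_apply, D3_apply,
    smul_eq_mul, EuclideanSpace.single_apply, Real.rpow_add hS, F]
  by_cases hij : i = j
  · subst hij; simp; ring
  · simp [hij, (Ne.symm hij : j ≠ i)]; ring

end AuxCalc

noncomputable section AuxCalc2
open Real

lemma pd3_pd3_F {v : E3} (hS : 0 < S3 v) (i j : Fin 3) {b p δ₁ : ℝ} :
    pd3 i (pd3 j (F b p δ₁)) v =
      F b p δ₁ v * ( 4 * (b*p)^2 * S3 v ^ ((p-1)+(p-1)) * v i * v j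
        - 4 * (b*p) * (p-1) * S3 v ^ (p-1-1) * v i * v j
        - 2 * (b*p) * S3 v ^ (p-1) * (if i = j then 1 else 0) ) := by
  have hev : pd3 j (F b p δ₁) =ᶠ[nhds v] G b p δ₁ j := by
    have ho : IsOpen {u : E3 | 0 < S3 u} := isOpen_lt continuous_const S3_cont
    filter_upwards [ho.mem_nhds hS] with u hu using pd3_F b p δ₁ hu j
  have h2 : pd3 i (pd3 j (F b p δ₁)) v = pd3 i (G b p δ₁ j) v := by
    rw [pd3, pd3, hev.fderiv_eq]
  rw [h2, pd3_G b p δ₁ hS i j]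

lemma norm_rpow_eq (u : E3) (p : ℝ) : ‖u‖ ^ (2 * p) = S3 u ^ p := by
  rw [S3_eq, ← Real.rpow_natCast ‖u‖ 2, ← Real.rpow_mul (norm_nonneg u)]
  norm_num

lemma deriv_exp_time {t s C₁ δ₁ : ℝ} (ht : t ≠ s) (R : ℝ) :
    deriv (fun τ => δ₁ * Real.exp (-(1 + C₁ / (τ - s)) * R)) t
      = δ₁ * Real.exp (-(1 + C₁ / (t - s)) * R) * (C₁ / (t - s)^2 * R) := by
  have h1 : HasDerivAt (fun τ : ℝ => τ - s) 1 t := (hasDerivAt_id t).sub_const s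
  have h2 : HasDerivAt (fun τ => C₁ / (τ - s)) (-(C₁ / (t-s)^2)) t := by
    have h := (hasDerivAt_const t C₁).div h1 (sub_ne_zero.mpr ht)
    refine h.congr_deriv ?_
    ring
  have h3 := (((h2.const_add 1).neg.mul_const R).exp).const_mul δ₁
  have h4 := h3.deriv; simp only [Pi.neg_apply] at h4; rw [h4]; ring

lemma sum_alg (a : Matrix (Fin 3) (Fin 3) ℝ) (v : E3) (A c₁ c₂ c₃ : ℝ) :
    ∑ i, ∑ j, a i j * (A * (c₁ * v i * v j - c₂ * v i * v j - c₃ * (if i = j then 1 else 0)))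
      = A * c₁ * (∑ i, ∑ j, a i j * v i * v j) - A * c₂ * (∑ i, ∑ j, a i j * v i * v j)
        - A * c₃ * Matrix.trace a := by
  simp [Fin.sum_univ_three, Matrix.trace, Matrix.diag]; ring

lemma jap_pow_bounds (γ r : ℝ) (hγl : -3 ≤ γ) (hγu : γ < 0) (hr1 : 1 ≤ r) :
    (1/8) * r ^ γ ≤ Real.sqrt (1 + r^2) ^ γ ∧ Real.sqrt (1 + r^2) ^ γ ≤ r ^ γ ∧
    Real.sqrt (1 + r^2) ^ (γ + 2) ≤ 2 * (r ^ γ * r ^ (2:ℝ)) := by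
  have hr0 : (0:ℝ) < r := by linarith
  set J := Real.sqrt (1 + r^2) with hJ
  have hJ0 : 0 < J := Real.sqrt_pos.2 (by positivity)
  have hJsq : J^2 = 1 + r^2 := Real.sq_sqrt (by positivity)
  have hrJ : r ≤ J := by nlinarith [hJsq, hJ0, hr0]
  have hJ2r : J ≤ 2*r := by nlinarith [hJsq, hJ0, hr0, hr1]
  have hJγu : J ^ γ ≤ r ^ γ := Real.rpow_le_rpow_of_nonpos hr0 hrJ hγu.le
  have hr2 : r ^ (2:ℝ) = r ^ 2 := Real.rpow_two r
  refine ⟨?_, hJγu, ?_⟩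
  · have h8 : (1/8 : ℝ) ≤ (2:ℝ) ^ γ := by
      have h1 : (2:ℝ) ^ (-3:ℝ) ≤ (2:ℝ) ^ γ := Real.rpow_le_rpow_of_exponent_le one_le_two hγl
      have h2 : (2:ℝ) ^ (-3:ℝ) = 1/8 := by
        rw [Real.rpow_neg (by norm_num), show (3:ℝ) = ((3:ℕ):ℝ) by norm_num,
          Real.rpow_natCast]
        norm_num
      calc (1/8 : ℝ) = (2:ℝ) ^ (-3:ℝ) := h2.symm
        _ ≤ (2:ℝ) ^ γ := h1
    calc (1/8) * r ^ γ ≤ (2:ℝ) ^ γ * r ^ γ :=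
          mul_le_mul_of_nonneg_right h8 (Real.rpow_nonneg hr0.le γ)
      _ = (2 * r) ^ γ := (Real.mul_rpow (by norm_num) hr0.le).symm
      _ ≤ J ^ γ := Real.rpow_le_rpow_of_nonpos hJ0 hJ2r hγu.le
  · rw [Real.rpow_add hJ0]
    have hJ2 : J ^ (2:ℝ) ≤ 2 * r ^ 2 := by
      rw [Real.rpow_two, hJsq]; nlinarith
    calc J ^ γ * J ^ (2:ℝ) ≤ r ^ γ * (2 * r ^ 2) :=
          mul_le_mul hJγu hJ2 (Real.rpow_nonneg hJ0.le _) (Real.rpow_nonneg hr0.le _)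
      _ = 2 * (r ^ γ * r ^ (2:ℝ)) := by rw [hr2]; ring

lemma scalar_main (lam Lam p C₁ Tm τ b : ℝ) (hlam : 0 < lam) (hLam : 0 < Lam)
    (hp1 : 1 ≤ p) (hC₁ : C₁ = 4/(lam*p^2) + 16*Lam/lam*Tm)
    (hτ : 0 < τ) (hτT : τ ≤ Tm) (hb : b = 1 + C₁/τ) :
    C₁/τ^2 - lam/2*p^2*b^2 + 4*Lam*p^2*b ≤ 0 := by
  have hp0 : 0 < p := by linarith
  have hTm : 0 < Tm := lt_of_lt_of_le hτ hτT
  have hpp : 0 < lam * p^2 := mul_pos hlam (pow_pos hp0 2)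
  have hC1a : 4/(lam*p^2) ≤ C₁ := by
    rw [hC₁]
    have : 0 < 16*Lam/lam*Tm := mul_pos (div_pos (by linarith) hlam) hTm
    linarith
  have hC₁pos : 0 < C₁ := lt_of_lt_of_le (div_pos (by norm_num) hpp) hC1a
  set u : ℝ := C₁/τ with hu
  have hu0 : 0 < u := div_pos hC₁pos hτ
  have huB : 16*Lam/lam ≤ u := by
    have h1 : 16*Lam/lam*Tm ≤ C₁ := by
      rw [hC₁]
      have : 0 < 4/(lam*p^2) := div_pos (by norm_num) hpp
      linarith
    have h3 : 16*Lam/lam ≤ C₁/Tm := (le_div_iff₀ hTm).2 h1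
    have h2 : C₁/Tm ≤ C₁/τ := by gcongr
    linarith
  have hu2 : C₁/τ^2 ≤ lam*p^2/4 * u^2 := by
    have hA : C₁ ≤ lam*p^2/4 * C₁^2 := by
      have h4 : 4 ≤ lam*p^2 * C₁ := by
        rw [div_le_iff₀ hpp] at hC1a
        linarith [hC1a]
      nlinarith [hC₁pos]
    calc C₁/τ^2 ≤ (lam*p^2/4 * C₁^2)/τ^2 := by gcongr
      _ = lam*p^2/4 * u^2 := by rw [hu]; field_simp
  have hbu : b = 1 + u := hb
  have huB' : 16*Lam ≤ lam*u := by
    rw [div_le_iff₀ hlam] at huB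
    linarith
  have hp2 : 0 < p^2 := pow_pos hp0 2
  have hk : (0:ℝ) ≤ (lam*u - 16*Lam)*u := mul_nonneg (by linarith) hu0.le
  have hkp : (0:ℝ) ≤ p^2*((lam*u - 16*Lam)*u) := mul_nonneg hp2.le hk
  have hB2 : 16*Lam*p^2 ≤ lam*u*p^2 := mul_le_mul_of_nonneg_right huB' hp2.le
  rw [hbu]
  nlinarith [hu2, hkp, hB2, mul_pos hLam hp2, mul_pos hlam hp2]

lemma bracket_nonpos (γ lam Lam p C₁ Tm τ b r Q Tr c : ℝ)
    (hγl : -3 ≤ γ) (hγu : γ < 0) (hlam : 0 < lam) (hLam : 0 < Lam)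
    (hp : p = (2-γ)/2) (hC₁ : C₁ = 4/(lam*p^2) + 16*Lam/lam*Tm)
    (hτ : 0 < τ) (hτT : τ ≤ Tm) (hb : b = 1 + C₁/τ) (hr1 : 1 ≤ r)
    (hQl : lam/8 * (r^(2:ℝ) * r^γ) ≤ Q) (hQu : Q ≤ Lam * (r^(2:ℝ) * r^γ))
    (hTr : Tr ≤ 2*Lam * (r^γ * r^(2:ℝ))) (hc : 0 ≤ c) :
    C₁/τ^2 * r^(2*p) - (4*(b*p)^2 * r^(2*((p-1)+(p-1)))) * Q
      + (4*(b*p)*(p-1) * r^(2*(p-1-1))) * Q + (2*(b*p) * r^(2*(p-1))) * Tr - c ≤ 0 := by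
  have hr0 : (0:ℝ) < r := by linarith
  have hp1 : 1 ≤ p := by rw [hp]; linarith
  have hp0 : 0 < p := by linarith
  have hγp : γ = 2 - 2*p := by rw [hp]; ring
  have hTm : 0 < Tm := lt_of_lt_of_le hτ hτT
  have hpp : 0 < lam * p^2 := mul_pos hlam (pow_pos hp0 2)
  have hC₁pos : 0 < C₁ := by
    rw [hC₁]
    have h1 : 0 < 4/(lam*p^2) := div_pos (by norm_num) hpp
    have h2 : 0 < 16*Lam/lam*Tm := mul_pos (div_pos (by linarith) hlam) hTm
    linarith
  have hb1 : 1 ≤ b := by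
    rw [hb]
    have : 0 < C₁/τ := div_pos hC₁pos hτ
    linarith
  have hb0 : 0 < b := by linarith
  have E1 : r ^ (2*((p-1)+(p-1))) * (r^(2:ℝ) * r^γ) = r^(2*p) := by
    rw [← Real.rpow_add hr0, ← Real.rpow_add hr0]
    congr 1; linarith
  have E2 : r ^ (2*(p-1-1)) * (r^(2:ℝ) * r^γ) = 1 := by
    rw [← Real.rpow_add hr0, ← Real.rpow_add hr0,
      show 2*(p-1-1) + ((2:ℝ) + γ) = 0 by linarith, Real.rpow_zero]
  have E3 : r ^ (2*(p-1)) * (r^γ * r^(2:ℝ)) = r^(2*p) * r^γ := by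
    rw [← Real.rpow_add hr0, ← Real.rpow_add hr0, ← Real.rpow_add hr0]
    congr 1; linarith
  have E4 : r^γ ≤ 1 := Real.rpow_le_one_of_one_le_of_nonpos hr1 hγu.le
  have E5 : (1:ℝ) ≤ r^(2*p) := by
    have h := Real.rpow_le_rpow_of_exponent_le hr1 (show (0:ℝ) ≤ 2*p by linarith)
    simpa using h
  have E6 : (0:ℝ) ≤ r^(2*p) := by positivity
  have hbpnn : (0:ℝ) ≤ b*p := mul_nonneg hb0.le hp0.le
  have hp1' : (0:ℝ) ≤ p - 1 := by linarith
  have T1 : lam/2*p^2*b^2 * r^(2*p) ≤ (4*(b*p)^2 * r^(2*((p-1)+(p-1)))) * Q := by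
    have h := mul_le_mul_of_nonneg_left hQl
      (show (0:ℝ) ≤ 4*(b*p)^2 * r^(2*((p-1)+(p-1))) by positivity)
    calc lam/2*p^2*b^2 * r^(2*p)
        = (4*(b*p)^2 * r^(2*((p-1)+(p-1)))) * (lam/8 * (r^(2:ℝ) * r^γ)) := by
          rw [show (4*(b*p)^2 * r ^ (2*((p-1)+(p-1)))) * (lam/8 * (r^(2:ℝ) * r^γ))
            = lam/2*p^2*b^2 * (r ^ (2*((p-1)+(p-1))) * (r^(2:ℝ) * r^γ)) from by ring, E1]
      _ ≤ _ := h
  have T2 : (4*(b*p)*(p-1) * r^(2*(p-1-1))) * Q ≤ 4*Lam*(b*p)*(p-1) * r^(2*p) := by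
    have hco : (0:ℝ) ≤ 4*(b*p)*(p-1) * r^(2*(p-1-1)) := by
      have := Real.rpow_nonneg hr0.le (2*(p-1-1))
      have h4 : (0:ℝ) ≤ 4*(b*p)*(p-1) := by nlinarith
      exact mul_nonneg h4 this
    have h := mul_le_mul_of_nonneg_left hQu hco
    have heq : (4*(b*p)*(p-1) * r^(2*(p-1-1))) * (Lam * (r^(2:ℝ) * r^γ))
        = 4*Lam*(b*p)*(p-1) := by
      rw [show (4*(b*p)*(p-1) * r^(2*(p-1-1))) * (Lam * (r^(2:ℝ) * r^γ))
        = 4*Lam*(b*p)*(p-1) * (r^(2*(p-1-1)) * (r^(2:ℝ) * r^γ)) from by ring, E2]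
      ring
    have hfin : 4*Lam*(b*p)*(p-1) ≤ 4*Lam*(b*p)*(p-1) * r^(2*p) := by
      nlinarith [mul_nonneg (mul_nonneg (mul_nonneg (by linarith : (0:ℝ) ≤ 4*Lam) hbpnn) hp1') (sub_nonneg.2 E5)]
    calc (4*(b*p)*(p-1) * r^(2*(p-1-1))) * Q
        ≤ (4*(b*p)*(p-1) * r^(2*(p-1-1))) * (Lam * (r^(2:ℝ) * r^γ)) := h
      _ = 4*Lam*(b*p)*(p-1) := heq
      _ ≤ 4*Lam*(b*p)*(p-1) * r^(2*p) := hfin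
  have T3 : (2*(b*p) * r^(2*(p-1))) * Tr ≤ 4*Lam*(b*p) * r^(2*p) := by
    have hco : (0:ℝ) ≤ 2*(b*p) * r^(2*(p-1)) := by positivity
    have h := mul_le_mul_of_nonneg_left hTr hco
    have heq : (2*(b*p) * r^(2*(p-1))) * (2*Lam * (r^γ * r^(2:ℝ)))
        = 4*Lam*(b*p) * (r^(2*p) * r^γ) := by
      rw [show (2*(b*p) * r^(2*(p-1))) * (2*Lam * (r^γ * r^(2:ℝ)))
        = 4*Lam*(b*p) * (r^(2*(p-1)) * (r^γ * r^(2:ℝ))) from by ring, E3]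
    have hfin : 4*Lam*(b*p) * (r^(2*p) * r^γ) ≤ 4*Lam*(b*p) * r^(2*p) := by
      have h1 : r^(2*p) * r^γ ≤ r^(2*p) * 1 :=
        mul_le_mul_of_nonneg_left E4 E6
      have h2 : (0:ℝ) ≤ 4*Lam*(b*p) := by positivity
      nlinarith [mul_le_mul_of_nonneg_left h1 h2]
    calc (2*(b*p) * r^(2*(p-1))) * Tr
        ≤ (2*(b*p) * r^(2*(p-1))) * (2*Lam * (r^γ * r^(2:ℝ))) := h
      _ = 4*Lam*(b*p) * (r^(2*p) * r^γ) := heq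
      _ ≤ 4*Lam*(b*p) * r^(2*p) := hfin
  have hmain := scalar_main lam Lam p C₁ Tm τ b hlam hLam hp1 hC₁ hτ hτT hb
  have hprod : (C₁/τ^2 - lam/2*p^2*b^2 + 4*Lam*p^2*b) * r^(2*p) ≤ 0 :=
    mul_nonpos_of_nonpos_of_nonneg hmain E6
  nlinarith [T1, T2, T3, hprod, hc]

end AuxCalc2

/-- **The sub-solution construction in the proof of Theorem 1.3 (ii).** -/
theorem landau_subsolution
    (γ Tlow T lam Lam : ℝ)
    (hγ : γ ∈ Set.Ico (-3 : ℝ) 0)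
    (hTlow : 0 < Tlow) (hT : Tlow ≤ T) (hlam : 0 < lam) (hLam : 0 < Lam)
    (abar : ℝ → E3 → E3 → Matrix (Fin 3) (Fin 3) ℝ)
    (cbar : ℝ → E3 → E3 → ℝ)
    (habar_symm : ∀ t ∈ Set.Ioc (Tlow / 2) T, ∀ x v : E3, (abar t x v).IsSymm)
    (hc_nonneg : ∀ t ∈ Set.Ioc (Tlow / 2) T, ∀ x v : E3, 0 ≤ cbar t x v)
    (h_ell_low : ∀ t ∈ Set.Ioc (Tlow / 2) T, ∀ x v : E3, ∀ e : E3, ‖e‖ = 1 →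
      lam * jap v ^ γ ≤ ∑ i, ∑ j, abar t x v i j * e i * e j)
    (h_ell_low_v : ∀ t ∈ Set.Ioc (Tlow / 2) T, ∀ x v : E3,
      lam * ‖v‖ ^ 2 * jap v ^ γ ≤ ∑ i, ∑ j, abar t x v i j * v i * v j)
    (h_tr_up : ∀ t ∈ Set.Ioc (Tlow / 2) T, ∀ x v : E3,
      Matrix.trace (abar t x v) ≤ Lam * jap v ^ (γ + 2))
    (h_up_v : ∀ t ∈ Set.Ioc (Tlow / 2) T, ∀ x v : E3,
      (∑ i, ∑ j, abar t x v i j * v i * v j) ≤ Lam * ‖v‖ ^ 2 * jap v ^ γ) :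
    ∃ C₁ : ℝ, 0 < C₁ ∧
      ∀ δ₁ : ℝ, 0 < δ₁ →
        ∀ t ∈ Set.Ioc (Tlow / 2) T, ∀ x v : E3, 1 ≤ ‖v‖ →
          deriv (fun s => subf γ Tlow δ₁ C₁ s v) t -
            (∑ i, ∑ j, abar t x v i j *
              pd3 i (pd3 j (fun u => subf γ Tlow δ₁ C₁ t u)) v) -
            cbar t x v * subf γ Tlow δ₁ C₁ t v ≤ 0 := by
  obtain ⟨hγl, hγu⟩ := hγ
  set p : ℝ := (2 - γ) / 2 with hp
  have h2p : 2 * p = 2 - γ := by rw [hp]; ring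
  have hTs : 0 < T - Tlow / 2 := by linarith
  set C₁ : ℝ := 4 / (lam * p ^ 2) + 16 * Lam / lam * (T - Tlow / 2) with hC₁def
  have hp1 : 1 ≤ p := by rw [hp]; linarith
  have hp0 : 0 < p := by linarith
  have hC₁ : 0 < C₁ := by
    rw [hC₁def]
    have hpp : 0 < lam * p ^ 2 := mul_pos hlam (pow_pos hp0 2)
    have h1 : 0 < 4 / (lam * p ^ 2) := div_pos (by norm_num) hpp
    have h2 : 0 < 16 * Lam / lam * (T - Tlow / 2) :=
      mul_pos (div_pos (by linarith) hlam) hTs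
    linarith
  refine ⟨C₁, hC₁, ?_⟩
  intro δ₁ hδ t ht x v hv
  have hts : 0 < t - Tlow / 2 := by have := ht.1; linarith
  have htT : t - Tlow / 2 ≤ T - Tlow / 2 := by have := ht.2; linarith
  set b : ℝ := 1 + C₁ / (t - Tlow / 2) with hb
  set r : ℝ := ‖v‖ with hr
  have hr0 : 0 < r := by linarith
  have hSpos : 0 < S3 v := by rw [S3_eq v, ← hr]; positivity
  have hnv : ∀ u : E3, ‖u‖ ^ (2 - γ) = S3 u ^ p := fun u => by
    rw [← h2p]; exact norm_rpow_eq u p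
  have hfun : (fun u => subf γ Tlow δ₁ C₁ t u) = F b p δ₁ := by
    funext u; simp only [subf, F]; rw [hnv u, hb]
  have hne : t ≠ Tlow / 2 := by intro h; rw [h] at hts; simp at hts
  -- the time derivative
  have hderiv : deriv (fun s => subf γ Tlow δ₁ C₁ s v) t
      = F b p δ₁ v * (C₁ / (t - Tlow / 2) ^ 2 * S3 v ^ p) := by
    have h := deriv_exp_time (t := t) (s := Tlow / 2) (C₁ := C₁) (δ₁ := δ₁) hne (‖v‖ ^ (2 - γ))
    simp only [subf]
    rw [h, hnv v]
    simp only [F, hb]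
  -- the second derivatives
  have hsum : (∑ i, ∑ j, abar t x v i j *
        pd3 i (pd3 j (fun u => subf γ Tlow δ₁ C₁ t u)) v)
      = F b p δ₁ v * (4 * (b*p)^2 * S3 v ^ ((p-1)+(p-1)))
          * (∑ i, ∑ j, abar t x v i j * v i * v j)
        - F b p δ₁ v * (4 * (b*p) * (p-1) * S3 v ^ (p-1-1))
          * (∑ i, ∑ j, abar t x v i j * v i * v j)
        - F b p δ₁ v * (2 * (b*p) * S3 v ^ (p-1)) * Matrix.trace (abar t x v) := by
    rw [hfun]
    simp only [pd3_pd3_F hSpos]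
    exact sum_alg (abar t x v) v (F b p δ₁ v) _ _ _
  have hLHS : deriv (fun s => subf γ Tlow δ₁ C₁ s v) t -
        (∑ i, ∑ j, abar t x v i j *
          pd3 i (pd3 j (fun u => subf γ Tlow δ₁ C₁ t u)) v) -
        cbar t x v * subf γ Tlow δ₁ C₁ t v
      = F b p δ₁ v * (C₁ / (t - Tlow / 2) ^ 2 * S3 v ^ p
          - (4 * (b*p)^2 * S3 v ^ ((p-1)+(p-1))) * (∑ i, ∑ j, abar t x v i j * v i * v j)
          + (4 * (b*p) * (p-1) * S3 v ^ (p-1-1)) * (∑ i, ∑ j, abar t x v i j * v i * v j)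
          + (2 * (b*p) * S3 v ^ (p-1)) * Matrix.trace (abar t x v)
          - cbar t x v) := by
    rw [hderiv, hsum, show subf γ Tlow δ₁ C₁ t v = F b p δ₁ v from congrFun hfun v]
    ring
  rw [hLHS]
  have hFnn : 0 ≤ F b p δ₁ v := by
    rw [F]; positivity
  apply mul_nonpos_of_nonneg_of_nonpos hFnn
  -- convert S3-powers into r-powers
  have hSp : ∀ e : ℝ, S3 v ^ e = r ^ (2*e) := fun e => by
    rw [← norm_rpow_eq v e, hr]
  rw [hSp p, hSp ((p-1)+(p-1)), hSp (p-1-1), hSp (p-1)]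
  -- bounds on the coefficient matrix
  have hj : jap v = Real.sqrt (1 + r ^ 2) := by rw [jap, hr]
  obtain ⟨hJ1, hJ2, hJ3⟩ := jap_pow_bounds γ r hγl hγu hv
  rw [← hj] at hJ1 hJ2 hJ3
  have hr2 : r ^ (2:ℝ) = r ^ 2 := Real.rpow_two r
  have hQl' : lam/8 * (r^(2:ℝ) * r^γ) ≤ ∑ i, ∑ j, abar t x v i j * v i * v j := by
    have hQl := h_ell_low_v t ht x v
    have h := mul_le_mul_of_nonneg_left hJ1 (show (0:ℝ) ≤ lam * r^2 by positivity)
    calc lam/8 * (r^(2:ℝ) * r^γ) = lam * r^2 * ((1/8) * r^γ) := by rw [hr2]; ring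
      _ ≤ lam * r^2 * jap v ^ γ := h
      _ ≤ _ := hQl
  have hQu' : (∑ i, ∑ j, abar t x v i j * v i * v j) ≤ Lam * (r^(2:ℝ) * r^γ) := by
    have hQu := h_up_v t ht x v
    have h := mul_le_mul_of_nonneg_left hJ2 (show (0:ℝ) ≤ Lam * r^2 by positivity)
    calc (∑ i, ∑ j, abar t x v i j * v i * v j) ≤ Lam * r^2 * jap v ^ γ := hQu
      _ ≤ Lam * r^2 * r^γ := h
      _ = Lam * (r^(2:ℝ) * r^γ) := by rw [hr2]; ring
  have hTr' : Matrix.trace (abar t x v) ≤ 2*Lam * (r^γ * r^(2:ℝ)) := by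
    have hTrb := h_tr_up t ht x v
    have h := mul_le_mul_of_nonneg_left hJ3 hLam.le
    calc Matrix.trace (abar t x v) ≤ Lam * jap v ^ (γ+2) := hTrb
      _ ≤ Lam * (2 * (r^γ * r^(2:ℝ))) := h
      _ = 2*Lam * (r^γ * r^(2:ℝ)) := by ring
  exact bracket_nonpos γ lam Lam p C₁ (T - Tlow/2) (t - Tlow/2) b r
    (∑ i, ∑ j, abar t x v i j * v i * v j) (Matrix.trace (abar t x v)) (cbar t x v)
    hγl hγu hlam hLam hp hC₁def hts htT hb hv hQl' hQu' hTr' (hc_nonneg t ht x v)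


end
end Stmt17
end

section
/- Let γ ∈ [−3,0), T > 0, ρ > 0, C₀ > 0. Suppose ā : [0,T]×ℝ³×ℝ³ → Sym₃(ℝ) is pointwise nonnegative definite with tr ā(t,x,v) ≤ C₀⟨v⟩^{γ+2} and v·ā(t,x,v)v ≤ C₀|v|²⟨v⟩^γ for all (t,x,v), and c̄ : [0,T]×ℝ³×ℝ³ → ℝ satisfies 0 ≤ c̄(t,x,v) ≤ C₀⟨v⟩^γ. Then there exist constants C > 0, depending only on γ and C₀, and α > 0, depending only on γ, C₀, and ρ, such that for every K > 0 the function f̄(t,x,v) = K exp(αt − β(t)|v|^{2−γ}) with β(t) = ρ/(2ρCt + 1) satisfies ∂_t f̄ + v·∇_x f̄ − tr(ā(t,x,v) D²_v f̄) − c̄(t,x,v) f̄ ≥ 0 on [0,T]×ℝ³×ℝ³ (i.e., f̄ is a supersolution of the linear Landau-type equation). -/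
namespace Stmt18

noncomputable section
open MeasureTheory Real Filter ENNReal

/-- Partial derivative ∂_{v_i} for functions on ℝ³. -/
def pd3 (i : Fin 3) (h : E3 → ℝ) : E3 → ℝ :=
  fun v => fderiv ℝ h v (EuclideanSpace.single i 1)

/-- The barrier f̄(t,x,v) = K exp(αt − β(t)|v|^{2−γ}) with β(t) = ρ/(2ρCt + 1). -/
def supf (γ ρ K α C : ℝ) (t : ℝ) (v : E3) : ℝ :=
  K * Real.exp (α * t - ρ / (2 * ρ * C * t + 1) * ‖v‖ ^ (2 - γ))

section Helpers

lemma rpow_norm_eq (r : ℝ) (w : E3) : ((‖w‖ : ℝ) ^ 2) ^ (r / 2) = ‖w‖ ^ r := by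
  rw [← Real.rpow_natCast ‖w‖ 2, ← Real.rpow_mul (norm_nonneg w)]
  norm_num
  rw [show (2:ℝ) * (r / 2) = r by ring]

lemma norm_rpow_hasFDerivAt {r : ℝ} (v : E3) (h : v ≠ 0 ∨ 2 ≤ r) :
    HasFDerivAt (fun w : E3 => ‖w‖ ^ r) ((r * ‖v‖ ^ (r - 2)) • (innerSL ℝ v)) v := by
  have hsq := (hasStrictFDerivAt_norm_sq v).hasFDerivAt
  have hcond : ((‖v‖ : ℝ) ^ 2) ≠ 0 ∨ 1 ≤ r / 2 := by
    rcases h with h | h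
    · exact Or.inl (by simpa using h)
    · exact Or.inr (by linarith)
  have key := (Real.hasDerivAt_rpow_const hcond).comp_hasFDerivAt v hsq
  have hfun : ((fun s : ℝ => s ^ (r / 2)) ∘ (fun w : E3 => (‖w‖ : ℝ) ^ 2))
      = fun w : E3 => ‖w‖ ^ r := by
    funext w
    simp only [Function.comp_apply, rpow_norm_eq]
  rw [hfun] at key
  refine key.congr_fderiv ?_
  ext w
  have h2 : ((‖v‖ : ℝ) ^ 2) ^ (r / 2 - 1) = ‖v‖ ^ (r - 2) := by
    rw [← Real.rpow_natCast ‖v‖ 2, ← Real.rpow_mul (norm_nonneg v)]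
    norm_num
    ring_nf
  simp only [ContinuousLinearMap.smul_apply, smul_eq_mul, nsmul_eq_mul, Nat.cast_ofNat, h2]
  ring

lemma efun_hasFDerivAt (A b p : ℝ) (hp : 2 ≤ p) (v : E3) :
    HasFDerivAt (fun w : E3 => A * Real.exp (-(b * ‖w‖ ^ p)))
      ((-(A * b * p) * ‖v‖ ^ (p - 2) * Real.exp (-(b * ‖v‖ ^ p))) • (innerSL ℝ v)) v := by
  have h1 := norm_rpow_hasFDerivAt v (Or.inr hp)
  have h2 := (((h1.const_mul b).neg).exp).const_mul A
  refine h2.congr_fderiv ?_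
  ext w
  simp only [ContinuousLinearMap.smul_apply, ContinuousLinearMap.neg_apply, smul_eq_mul, Pi.neg_apply]
  ring

lemma pd3_efun (A b p : ℝ) (hp : 2 ≤ p) (j : Fin 3) :
    pd3 j (fun w : E3 => A * Real.exp (-(b * ‖w‖ ^ p)))
      = fun v => -(A * b * p) * ‖v‖ ^ (p - 2) * Real.exp (-(b * ‖v‖ ^ p)) * v j := by
  funext v
  rw [pd3, (efun_hasFDerivAt A b p hp v).fderiv]
  simp only [ContinuousLinearMap.smul_apply, smul_eq_mul, innerSL_apply_apply,
    EuclideanSpace.inner_single_right, conj_trivial, mul_one, one_mul]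

lemma coord_hasFDerivAt (j : Fin 3) (v : E3) :
    HasFDerivAt (fun w : E3 => w j) (innerSL ℝ (EuclideanSpace.single j (1 : ℝ))) v := by
  have h := (innerSL ℝ (EuclideanSpace.single j (1 : ℝ))).hasFDerivAt (x := v)
  have heq : ⇑(innerSL ℝ (EuclideanSpace.single j (1 : ℝ))) = fun w : E3 => w j := by
    funext w
    rw [show (innerSL ℝ (EuclideanSpace.single j (1:ℝ))) w = inner ℝ (EuclideanSpace.single j (1:ℝ)) w from rfl]
    rw [EuclideanSpace.inner_single_left]
    simp
  rwa [heq] at h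

lemma abs_coord_le (v : E3) (j : Fin 3) : |v j| ≤ ‖v‖ := by
  have h := norm_inner_le_norm (𝕜 := ℝ) (EuclideanSpace.single j (1 : ℝ)) v
  rw [EuclideanSpace.inner_single_left] at h
  simpa [EuclideanSpace.norm_single] using h

lemma coordmul_hasFDerivAt_zero {q : ℝ} (hq : 0 < q) (j : Fin 3) :
    HasFDerivAt (fun w : E3 => ‖w‖ ^ q * w j) (0 : E3 →L[ℝ] ℝ) 0 := by
  rw [hasFDerivAt_iff_isLittleO_nhds_zero]
  have h0 : ‖(0 : E3)‖ ^ q * (0 : E3) j = 0 := by simp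
  simp only [zero_add, h0, ContinuousLinearMap.zero_apply, sub_zero]
  rw [Asymptotics.isLittleO_iff]
  intro c hc
  have ht : Filter.Tendsto (fun w : E3 => ‖w‖ ^ q) (nhds 0) (nhds 0) := by
    have hc1 : ContinuousAt (fun s : ℝ => s ^ q) 0 :=
      Real.continuousAt_rpow_const 0 q (Or.inr hq.le)
    have := hc1.tendsto.comp (continuous_norm.tendsto' (0 : E3) 0 norm_zero)
    simpa [Function.comp_def, Real.zero_rpow hq.ne'] using this
  filter_upwards [ht.eventually_lt_const hc] with w hw
  have h1 : |‖w‖ ^ q * w j| ≤ ‖w‖ ^ q * ‖w‖ := by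
    rw [abs_mul, abs_of_nonneg (Real.rpow_nonneg (norm_nonneg w) q)]
    exact mul_le_mul_of_nonneg_left (abs_coord_le w j) (Real.rpow_nonneg (norm_nonneg w) q)
  calc ‖‖w‖ ^ q * w j‖ = |‖w‖ ^ q * w j| := rfl
    _ ≤ ‖w‖ ^ q * ‖w‖ := h1
    _ ≤ c * ‖w‖ := mul_le_mul_of_nonneg_right hw.le (norm_nonneg w)

lemma pd3_pd3_efun (A b p : ℝ) (hp : 2 < p) (i j : Fin 3) (v : E3) :
    pd3 i (pd3 j (fun w : E3 => A * Real.exp (-(b * ‖w‖ ^ p)))) v =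
      A * Real.exp (-(b * ‖v‖ ^ p)) *
        ((b ^ 2 * p ^ 2 * ‖v‖ ^ (2 * p - 4) - b * p * (p - 2) * ‖v‖ ^ (p - 4)) * (v i * v j)
          - b * p * ‖v‖ ^ (p - 2) * (if i = j then (1 : ℝ) else 0)) := by
  rw [pd3_efun A b p hp.le j]
  by_cases hv : v = 0
  · subst hv
    have hfun : (fun w : E3 => -(A * b * p) * ‖w‖ ^ (p - 2) * Real.exp (-(b * ‖w‖ ^ p)) * w j)
        = fun w : E3 => (-(A * b * p) * Real.exp (-(b * ‖w‖ ^ p))) * (‖w‖ ^ (p - 2) * w j) := by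
      funext w; ring
    have hS := efun_hasFDerivAt (-(A * b * p)) b p hp.le (0 : E3)
    have hT := coordmul_hasFDerivAt_zero (q := p - 2) (by linarith) j
    have hprod := hS.mul hT
    have hT0 : ‖(0 : E3)‖ ^ (p - 2) * (0 : E3) j = 0 := by simp
    rw [hT0, zero_smul, smul_zero, zero_add] at hprod
    simp only [Pi.mul_def] at hprod
    rw [pd3, hfun, hprod.fderiv]
    have : ‖(0 : E3)‖ ^ (p - 2) = 0 := by
      rw [norm_zero, Real.zero_rpow (by linarith : p - 2 ≠ 0)]
    simp [this]
    exact fun _ => Or.inr (Or.inr (Real.zero_rpow (by linarith)))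
  · -- v ≠ 0
    have hvn : (0 : ℝ) < ‖v‖ := norm_pos_iff.mpr hv
    have hfun : (fun w : E3 => -(A * b * p) * ‖w‖ ^ (p - 2) * Real.exp (-(b * ‖w‖ ^ p)) * w j)
        = fun w : E3 => -(A * b * p) * (‖w‖ ^ (p - 2) * ((1 : ℝ) * Real.exp (-(b * ‖w‖ ^ p)) * w j)) := by
      funext w; ring
    have hn := norm_rpow_hasFDerivAt (r := p - 2) v (Or.inl hv)
    have he : HasFDerivAt (fun w : E3 => (1 : ℝ) * Real.exp (-(b * ‖w‖ ^ p)))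
        ((-(1 * b * p) * ‖v‖ ^ (p - 2) * Real.exp (-(b * ‖v‖ ^ p))) • (innerSL ℝ v)) v :=
      efun_hasFDerivAt 1 b p hp.le v
    have hl := coord_hasFDerivAt j v
    have hprod := ((hn.mul (he.mul hl)).const_mul (-(A * b * p)))
    simp only [Pi.mul_apply] at hprod
    rw [pd3, hfun, hprod.fderiv]
    simp only [ContinuousLinearMap.smul_apply, ContinuousLinearMap.add_apply, smul_eq_mul]
    have e1 : (innerSL ℝ v) (EuclideanSpace.single i (1:ℝ)) = v i := by
      rw [show (innerSL ℝ v) (EuclideanSpace.single i (1:ℝ)) = inner ℝ v (EuclideanSpace.single i (1:ℝ)) from rfl]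
      rw [EuclideanSpace.inner_single_right]; simp
    have e2 : (innerSL ℝ (EuclideanSpace.single j (1:ℝ))) (EuclideanSpace.single i (1:ℝ))
        = (if i = j then (1:ℝ) else 0) := by
      rw [show (innerSL ℝ (EuclideanSpace.single j (1:ℝ))) (EuclideanSpace.single i (1:ℝ))
        = inner ℝ (EuclideanSpace.single j (1:ℝ)) (EuclideanSpace.single i (1:ℝ)) from rfl]
      rw [EuclideanSpace.inner_single_left]
      simp only [conj_trivial, one_mul, EuclideanSpace.single_apply]
      simp [eq_comm]
    rw [e1, e2]
    have r1 : ‖v‖ ^ (p - 2) * ‖v‖ ^ (p - 2) = ‖v‖ ^ (2 * p - 4) := by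
      rw [← Real.rpow_add hvn]; ring_nf
    have r2 : ‖v‖ ^ (p - 2 - 2) = ‖v‖ ^ (p - 4) := by ring_nf
    rw [r2]
    rw [show (2 : ℝ) * p - 4 = (p - 2) + (p - 2) by ring, Real.rpow_add hvn]
    ring

lemma deriv_supf_eq (γ ρ K α C : ℝ) (v : E3) {t : ℝ} (ht : 0 < 2 * ρ * C * t + 1) :
    deriv (fun s => supf γ ρ K α C s v) t
      = supf γ ρ K α C t v *
          (α + 2 * C * (ρ / (2 * ρ * C * t + 1)) ^ 2 * ‖v‖ ^ (2 - γ)) := by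
  have h1 : HasDerivAt (fun s : ℝ => 2 * ρ * C * s + 1) (2 * ρ * C) t := by
    simpa using ((hasDerivAt_id t).const_mul (2 * ρ * C)).add_const 1
  have h2 : HasDerivAt (fun s : ℝ => ρ / (2 * ρ * C * s + 1))
      (-(ρ * (2 * ρ * C) / (2 * ρ * C * t + 1) ^ 2)) t := by
    have h := (h1.inv ht.ne').const_mul ρ
    have heq : (fun s : ℝ => ρ * (2 * ρ * C * s + 1)⁻¹) = fun s : ℝ => ρ / (2 * ρ * C * s + 1) := by
      funext s; rw [div_eq_mul_inv]
    simp only [Pi.inv_apply, heq] at h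
    refine h.congr_deriv ?_
    field_simp
  have h3 : HasDerivAt (fun s : ℝ => α * s - ρ / (2 * ρ * C * s + 1) * ‖v‖ ^ (2 - γ))
      (α + ρ * (2 * ρ * C) / (2 * ρ * C * t + 1) ^ 2 * ‖v‖ ^ (2 - γ)) t := by
    have h := (((hasDerivAt_id t).const_mul α)).sub (h2.mul_const (‖v‖ ^ (2 - γ)))
    refine h.congr_deriv ?_
    ring
  have h4 := (h3.exp).const_mul K
  have heq : (fun s : ℝ => K * Real.exp (α * s - ρ / (2 * ρ * C * s + 1) * ‖v‖ ^ (2 - γ)))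
      = fun s => supf γ ρ K α C s v := by
    funext s; rw [supf]
  rw [heq] at h4
  rw [h4.deriv, supf]
  have : (2:ℝ) * C * (ρ / (2 * ρ * C * t + 1)) ^ 2 = ρ * (2 * ρ * C) / (2 * ρ * C * t + 1) ^ 2 := by
    field_simp
  rw [this]
  ring

end Helpers

/-- **The super-solution construction in the proof of Proposition 4.5.** -/
theorem landau_supersolution
    (γ T ρ C₀ : ℝ)
    (hγ : γ ∈ Set.Ico (-3 : ℝ) 0)
    (hT : 0 < T) (hρ : 0 < ρ) (hC₀ : 0 < C₀)
    (abar : ℝ → E3 → E3 → Matrix (Fin 3) (Fin 3) ℝ)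
    (cbar : ℝ → E3 → E3 → ℝ)
    (habar_psd : ∀ t ∈ Set.Icc (0 : ℝ) T, ∀ x v : E3, (abar t x v).PosSemidef)
    (h_tr_up : ∀ t ∈ Set.Icc (0 : ℝ) T, ∀ x v : E3,
      Matrix.trace (abar t x v) ≤ C₀ * jap v ^ (γ + 2))
    (h_up_v : ∀ t ∈ Set.Icc (0 : ℝ) T, ∀ x v : E3,
      (∑ i, ∑ j, abar t x v i j * v i * v j) ≤ C₀ * ‖v‖ ^ 2 * jap v ^ γ)
    (hc_nonneg : ∀ t ∈ Set.Icc (0 : ℝ) T, ∀ x v : E3, 0 ≤ cbar t x v)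
    (hc_up : ∀ t ∈ Set.Icc (0 : ℝ) T, ∀ x v : E3, cbar t x v ≤ C₀ * jap v ^ γ) :
    ∃ C : ℝ, 0 < C ∧ ∃ α : ℝ, 0 < α ∧
      ∀ K : ℝ, 0 < K →
        ∀ t ∈ Set.Icc (0 : ℝ) T, ∀ x v : E3,
          0 ≤ deriv (fun s => supf γ ρ K α C s v) t -
            (∑ i, ∑ j, abar t x v i j *
              pd3 i (pd3 j (fun u => supf γ ρ K α C t u)) v) -
            cbar t x v * supf γ ρ K α C t v := by
  obtain ⟨hγl, hγu⟩ := hγ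
  set p : ℝ := 2 - γ with hpdef
  have hp2 : (2 : ℝ) < p := by rw [hpdef]; linarith
  have hp0 : (0 : ℝ) < p := by linarith
  refine ⟨p ^ 2 * C₀ / 2, by positivity, C₀, hC₀, ?_⟩
  intro K hK t ht x v
  set C : ℝ := p ^ 2 * C₀ / 2 with hCdef
  have hC : 0 < C := by rw [hCdef]; positivity
  have hX : 0 < 2 * ρ * C * t + 1 := by
    have h0 : 0 ≤ 2 * ρ * C * t :=
      mul_nonneg (mul_nonneg (mul_nonneg (by norm_num) hρ.le) hC.le) ht.1
    linarith
  set b : ℝ := ρ / (2 * ρ * C * t + 1) with hbdef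
  have hb : 0 < b := div_pos hρ hX
  set A : ℝ := K * Real.exp (C₀ * t) with hAdef
  have hfun : (fun u => supf γ ρ K C₀ C t u) = fun w : E3 => A * Real.exp (-(b * ‖w‖ ^ p)) := by
    funext u
    simp only [supf]
    rw [← hbdef, ← hpdef, hAdef,
      show C₀ * t - b * ‖u‖ ^ p = C₀ * t + -(b * ‖u‖ ^ p) by ring, Real.exp_add]
    ring
  have hsup : supf γ ρ K C₀ C t v = A * Real.exp (-(b * ‖v‖ ^ p)) := congrFun hfun v
  have hE : 0 < A * Real.exp (-(b * ‖v‖ ^ p)) := by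
    rw [hAdef]
    positivity
  set E : ℝ := A * Real.exp (-(b * ‖v‖ ^ p)) with hEdef
  have hderiv : deriv (fun s => supf γ ρ K C₀ C s v) t
      = E * (C₀ + 2 * C * b ^ 2 * ‖v‖ ^ p) := by
    rw [deriv_supf_eq γ ρ K C₀ C v hX, hsup, ← hpdef, ← hbdef]
  set X : ℝ := b ^ 2 * p ^ 2 * ‖v‖ ^ (2 * p - 4) - b * p * (p - 2) * ‖v‖ ^ (p - 4) with hXdef
  set Y : ℝ := b * p * ‖v‖ ^ (p - 2) with hYdef
  have hsum : (∑ i, ∑ j, abar t x v i j *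
        pd3 i (pd3 j (fun u => supf γ ρ K C₀ C t u)) v)
      = E * (X * (∑ i, ∑ j, abar t x v i j * v i * v j) - Y * (∑ i, abar t x v i i)) := by
    rw [hfun]
    have hterm : ∀ i j : Fin 3, abar t x v i j *
          pd3 i (pd3 j (fun w : E3 => A * Real.exp (-(b * ‖w‖ ^ p)))) v
        = E * X * (abar t x v i j * v i * v j)
            - (if i = j then E * Y * abar t x v i j else 0) := by
      intro i j
      rw [pd3_pd3_efun A b p hp2 i j v]
      by_cases h : i = j <;> simp [h, hXdef, hYdef, ← hEdef] <;> ring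
    calc (∑ i, ∑ j, abar t x v i j *
            pd3 i (pd3 j (fun w : E3 => A * Real.exp (-(b * ‖w‖ ^ p)))) v)
        = ∑ i, ∑ j, (E * X * (abar t x v i j * v i * v j)
            - (if i = j then E * Y * abar t x v i j else 0)) := by
          exact Finset.sum_congr rfl fun i _ => Finset.sum_congr rfl fun j _ => hterm i j
      _ = ∑ i, (E * X * (∑ j, abar t x v i j * v i * v j) - E * Y * abar t x v i i) := by
          refine Finset.sum_congr rfl fun i _ => ?_
          rw [Finset.sum_sub_distrib, ← Finset.mul_sum, Finset.sum_ite_eq]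
          simp
      _ = E * (X * (∑ i, ∑ j, abar t x v i j * v i * v j) - Y * (∑ i, abar t x v i i)) := by
          rw [Finset.sum_sub_distrib, ← Finset.mul_sum, ← Finset.mul_sum]
          ring
  have hpsd := habar_psd t ht x v
  have hQ0 : 0 ≤ ∑ i, ∑ j, abar t x v i j * v i * v j := by
    have h := hpsd.dotProduct_mulVec_nonneg (fun k => v k)
    have e : dotProduct (star fun k => v k) ((abar t x v).mulVec fun k => v k)
        = ∑ i, ∑ j, abar t x v i j * v i * v j := by
      simp only [dotProduct, Matrix.mulVec, Pi.star_apply, star_trivial, Finset.mul_sum]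
      exact Finset.sum_congr rfl fun i _ => Finset.sum_congr rfl fun j _ => by ring
    rwa [e] at h
  have hdiag : ∀ i, 0 ≤ abar t x v i i := by
    intro i
    have h := hpsd.dotProduct_mulVec_nonneg (Pi.single i 1)
    have e : dotProduct (star (Pi.single i (1:ℝ))) ((abar t x v).mulVec (Pi.single i 1))
        = abar t x v i i := by
      simp [dotProduct, Matrix.mulVec, Pi.single_apply, Finset.sum_ite_eq, Finset.mul_sum]
    rwa [e] at h
  have hTr0 : 0 ≤ ∑ i, abar t x v i i := Finset.sum_nonneg fun i _ => hdiag i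
  have hjap1 : 1 ≤ jap v := by
    have h := Real.sqrt_le_sqrt (show (1:ℝ) ≤ 1 + ‖v‖ ^ 2 by nlinarith [sq_nonneg ‖v‖])
    simpa [jap, Real.sqrt_one] using h
  have hcb : cbar t x v ≤ C₀ := by
    have h1 : jap v ^ γ ≤ 1 := Real.rpow_le_one_of_one_le_of_nonpos hjap1 hγu.le
    have h2 := hc_up t ht x v
    nlinarith
  have hnorm_le_jap : ‖v‖ ≤ jap v := by
    have h := Real.sqrt_le_sqrt (show ‖v‖ ^ 2 ≤ 1 + ‖v‖ ^ 2 by linarith)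
    rwa [Real.sqrt_sq (norm_nonneg v)] at h
  have hkey : ‖v‖ ^ (2 * p - 4) * (C₀ * ‖v‖ ^ 2 * jap v ^ γ) ≤ C₀ * ‖v‖ ^ p := by
    by_cases hv : v = 0
    · subst hv
      rw [norm_zero, Real.zero_rpow (show 2 * p - 4 ≠ 0 from (by linarith : (0:ℝ) < 2 * p - 4).ne'),
        zero_mul]
      exact mul_nonneg hC₀.le (Real.rpow_nonneg le_rfl p)
    · have hvn : 0 < ‖v‖ := norm_pos_iff.mpr hv
      have h1 : jap v ^ γ ≤ ‖v‖ ^ γ := Real.rpow_le_rpow_of_nonpos hvn hnorm_le_jap hγu.le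
      have h2 : ‖v‖ ^ (2 * p - 4) * (‖v‖ ^ 2 * ‖v‖ ^ γ) = ‖v‖ ^ p := by
        rw [← Real.rpow_natCast ‖v‖ 2, ← Real.rpow_add hvn, ← Real.rpow_add hvn]
        congr 1
        rw [hpdef]
        push_cast
        ring
      calc ‖v‖ ^ (2 * p - 4) * (C₀ * ‖v‖ ^ 2 * jap v ^ γ)
          = C₀ * (‖v‖ ^ (2 * p - 4) * (‖v‖ ^ 2 * jap v ^ γ)) := by ring
        _ ≤ C₀ * (‖v‖ ^ (2 * p - 4) * (‖v‖ ^ 2 * ‖v‖ ^ γ)) := by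
            apply mul_le_mul_of_nonneg_left _ hC₀.le
            apply mul_le_mul_of_nonneg_left _ (Real.rpow_nonneg (norm_nonneg v) _)
            exact mul_le_mul_of_nonneg_left h1 (by positivity)
        _ = C₀ * ‖v‖ ^ p := by rw [h2]
  have hQup := h_up_v t ht x v
  have hterm2 : ‖v‖ ^ (2 * p - 4) * (∑ i, ∑ j, abar t x v i j * v i * v j) ≤ C₀ * ‖v‖ ^ p :=
    le_trans (mul_le_mul_of_nonneg_left hQup (Real.rpow_nonneg (norm_nonneg v) _)) hkey
  rw [hderiv, hsum, hsup]
  set Q : ℝ := ∑ i, ∑ j, abar t x v i j * v i * v j with hQdef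
  set Tr : ℝ := ∑ i, abar t x v i i with hTrdef
  have hexpand : E * (C₀ + 2 * C * b ^ 2 * ‖v‖ ^ p) - E * (X * Q - Y * Tr) - cbar t x v * E
      = E * (C₀ - cbar t x v)
        + (E * b ^ 2 * p ^ 2) * (C₀ * ‖v‖ ^ p - ‖v‖ ^ (2 * p - 4) * Q)
        + (E * (b * p * (p - 2) * ‖v‖ ^ (p - 4))) * Q
        + (E * Y) * Tr := by
    rw [hXdef, hYdef, hCdef]
    ring
  rw [hexpand]
  have t1 : 0 ≤ E * (C₀ - cbar t x v) := mul_nonneg hE.le (by linarith)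
  have t2 : 0 ≤ (E * b ^ 2 * p ^ 2) * (C₀ * ‖v‖ ^ p - ‖v‖ ^ (2 * p - 4) * Q) :=
    mul_nonneg (mul_nonneg (mul_nonneg hE.le (sq_nonneg b)) (sq_nonneg p)) (by linarith)
  have t3 : 0 ≤ (E * (b * p * (p - 2) * ‖v‖ ^ (p - 4))) * Q :=
    mul_nonneg (mul_nonneg hE.le (mul_nonneg (mul_nonneg (mul_nonneg hb.le hp0.le)
      (by linarith)) (Real.rpow_nonneg (norm_nonneg v) _))) hQ0
  have t4 : 0 ≤ (E * Y) * Tr :=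
    mul_nonneg (mul_nonneg hE.le (by
      rw [hYdef]
      exact mul_nonneg (mul_nonneg hb.le hp0.le) (Real.rpow_nonneg (norm_nonneg v) _))) hTr0
  linarith

end
end Stmt18
end
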